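/- Fix natural numbers $n \geq 1$ and $d \geq 1$. The real function $f(x) = \frac{n}{d\,x} - \frac{1}{1-(1-\frac{x}{n})^d}$ is decreasing (antitone) on the interval $[1, n]$, i.e., for all real $x, y$ with $1 \leq x \leq y \leq n$ one has $f(y) \leq f(x)$. -/

import Mathlib

open Finset

lemma pair_pow (u : ℝ) (hu : 0 ≤ u) (m c : ℕ) (h : c ≤ m) :
    2 * u ^ m ≤ u ^ (m - c) + u ^ (m + c) := by
  have h1 : u ^ (m - c) * u ^ c = u ^ m := by rw [← pow_add]; congr 1; omega
  have h2 : u ^ (m - c) * u ^ c * u ^ c = u ^ (m + c) := by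
    rw [mul_assoc, ← pow_add, ← pow_add]; congr 1; omega
  nlinarith [mul_nonneg (pow_nonneg hu (m - c)) (sq_nonneg (1 - u ^ c))]

lemma key_sum (u : ℝ) (hu : 0 ≤ u) (d : ℕ) (hd : 1 ≤ d) :
    (d : ℝ) ^ 2 * u ^ (d - 1) ≤ (∑ k ∈ range d, u ^ k) ^ 2 := by
  set m := d - 1 with hm
  set S := ∑ k ∈ range d, u ^ k with hS
  have hS2 : S ^ 2 = ∑ j ∈ range d, ∑ k ∈ range d, u ^ (j + k) := by
    rw [sq, hS, Finset.sum_mul_sum]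
    simp [pow_add]
  have hS2' : S ^ 2 = ∑ j ∈ range d, ∑ k ∈ range d, u ^ ((m - j) + (m - k)) := by
    rw [hS2]
    rw [← Finset.sum_range_reflect (fun j => ∑ k ∈ range d, u ^ (j + k)) d]
    apply Finset.sum_congr rfl
    intro j hj
    rw [← Finset.sum_range_reflect (fun k => u ^ ((d - 1 - j) + k)) d]
  have hbound : ∀ j ∈ range d, ∀ k ∈ range d,
      2 * u ^ m ≤ u ^ (j + k) + u ^ ((m - j) + (m - k)) := by
    intro j hj k hk
    simp only [mem_range] at hj hk
    rcases le_total (j + k) m with hc | hc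
    · have h1 : j + k = m - (m - (j + k)) := by omega
      have h2 : (m - j) + (m - k) = m + (m - (j + k)) := by omega
      rw [h1, h2]
      exact pair_pow u hu m (m - (j + k)) (by omega)
    · have h1 : j + k = m + (j + k - m) := by omega
      have h2 : (m - j) + (m - k) = m - (j + k - m) := by omega
      rw [h1, h2, add_comm]
      exact pair_pow u hu m (j + k - m) (by omega)
  have : ∑ j ∈ range d, ∑ k ∈ range d, (2 * u ^ m) ≤
      ∑ j ∈ range d, ∑ k ∈ range d, (u ^ (j + k) + u ^ ((m - j) + (m - k))) := by
    apply Finset.sum_le_sum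
    intro j hj
    apply Finset.sum_le_sum
    intro k hk
    exact hbound j hj k hk
  simp only [Finset.sum_add_distrib, ← hS2, ← hS2', Finset.sum_const, card_range,
    nsmul_eq_mul] at this
  nlinarith [this]

lemma key_sq (u : ℝ) (hu : 0 ≤ u) (d : ℕ) (hd : 1 ≤ d) :
    (d : ℝ) ^ 2 * (1 - u) ^ 2 * u ^ (d - 1) ≤ (1 - u ^ d) ^ 2 := by
  have hgs := geom_sum_mul u d
  have h1 : 1 - u ^ d = (∑ k ∈ range d, u ^ k) * (1 - u) := by linarith [hgs]
  rw [h1]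
  calc (d : ℝ) ^ 2 * (1 - u) ^ 2 * u ^ (d - 1)
      = ((d : ℝ) ^ 2 * u ^ (d - 1)) * (1 - u) ^ 2 := by ring
    _ ≤ (∑ k ∈ range d, u ^ k) ^ 2 * (1 - u) ^ 2 := by
        exact mul_le_mul_of_nonneg_right (key_sum u hu d hd) (sq_nonneg _)
    _ = ((∑ k ∈ range d, u ^ k) * (1 - u)) ^ 2 := by ring


theorem f_decreasing (n d : ℕ) (hn : 1 ≤ n) (hd : 1 ≤ d) :
    ∀ x y : ℝ, 1 ≤ x → x ≤ y → y ≤ n →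
      (n : ℝ) / (d * y) - 1 / (1 - (1 - y / n) ^ d)
        ≤ (n : ℝ) / (d * x) - 1 / (1 - (1 - x / n) ^ d) := by
  have hn' : (1:ℝ) ≤ (n:ℝ) := by exact_mod_cast hn
  have hd' : (1:ℝ) ≤ (d:ℝ) := by exact_mod_cast hd
  have hn0 : (0:ℝ) < n := by linarith
  have hd0 : (0:ℝ) < d := by linarith
  -- positivity of the second denominator on [1, n]
  have hg : ∀ x : ℝ, 1 ≤ x → x ≤ n → 0 < 1 - (1 - x / n) ^ d := by
    intro x h1 h2
    have hu0 : 0 ≤ 1 - x / n := by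
      have : x / n ≤ 1 := (div_le_one hn0).2 h2
      linarith
    have hu1 : 1 - x / n < 1 := by
      have : 0 < x / n := div_pos (by linarith) hn0
      linarith
    have := pow_lt_one₀ hu0 hu1 (by omega : d ≠ 0)
    linarith
  have hmain : AntitoneOn (fun x : ℝ => (n : ℝ) / (d * x) - 1 / (1 - (1 - x / n) ^ d))
      (Set.Icc 1 (n:ℝ)) := by
    apply antitoneOn_of_hasDerivWithinAt_nonpos (convex_Icc _ _)
      (f' := fun x => (0 * (d * x) - (n:ℝ) * d) / (d * x) ^ 2 -
        (0 * (1 - (1 - x / n) ^ d) - 1 * (0 - (d : ℝ) * (1 - x / n) ^ (d - 1) * (0 - 1 / n))) /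
          (1 - (1 - x / n) ^ d) ^ 2)
    · -- continuity
      apply ContinuousOn.sub
      · apply ContinuousOn.div continuousOn_const (continuous_const.mul continuous_id).continuousOn
        intro x hx
        have : (1:ℝ) ≤ x := hx.1
        exact ne_of_gt (mul_pos hd0 (show (0:ℝ) < x by linarith))
      · apply ContinuousOn.div continuousOn_const
        · fun_prop
        · intro x hx
          exact ne_of_gt (hg x hx.1 hx.2)
    · -- derivative formula
      intro x hx
      rw [interior_Icc] at hx
      obtain ⟨hx1, hxn⟩ := hx
      have hx0 : (0:ℝ) < x := by linarith
      apply HasDerivAt.hasDerivWithinAt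
      apply HasDerivAt.sub
      · have hden : HasDerivAt (fun y : ℝ => (d:ℝ) * y) (d:ℝ) x := by
          simpa using (hasDerivAt_id x).const_mul (d:ℝ)
        exact (hasDerivAt_const x (n:ℝ)).div hden (by positivity)
      · exact (hasDerivAt_const x 1).div
          ((hasDerivAt_const x 1).sub
            (((hasDerivAt_const x 1).sub ((hasDerivAt_id x).div_const (n:ℝ))).pow d))
          (ne_of_gt (hg x (le_of_lt hx1) (le_of_lt hxn)))
    · -- nonpositivity of the derivative
      intro x hx
      rw [interior_Icc] at hx
      obtain ⟨hx1, hxn⟩ := hx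
      have hx0 : (0:ℝ) < x := by linarith
      set u : ℝ := 1 - x / n with hu
      have hu0 : 0 ≤ u := by
        have : x / n ≤ 1 := (div_le_one hn0).2 (le_of_lt hxn)
        simp [hu]; linarith
      set g : ℝ := 1 - u ^ d with hgdef
      have hg0 : 0 < g := hg x (le_of_lt hx1) (le_of_lt hxn)
      have hkey := key_sq u hu0 d hd
      have h1mu : 1 - u = x / n := by simp [hu]
      rw [h1mu] at hkey
      have hpow : 0 ≤ u ^ (d - 1) := pow_nonneg hu0 _
      have goal2 : ((d : ℝ) * u ^ (d - 1) * (1 / n)) / g ^ 2 ≤ (n : ℝ) * d / (d * x) ^ 2 := by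
        rw [div_le_div_iff₀ (by positivity) (by positivity)]
        have expand : (d : ℝ) * u ^ (d - 1) * (1 / n) * (d * x) ^ 2
            = (n * d) * ((d : ℝ) ^ 2 * (x / n) ^ 2 * u ^ (d - 1)) := by
          field_simp
        rw [expand]
        exact mul_le_mul_of_nonneg_left hkey (by positivity)
      have e1 : (0 * (d * x) - (n:ℝ) * d) / (d * x) ^ 2 = -((n : ℝ) * d / (d * x) ^ 2) := by
        ring
      have e2 : (0 * g - 1 * (0 - (d : ℝ) * u ^ (d - 1) * (0 - 1 / n))) / g ^ 2
          = -(((d : ℝ) * u ^ (d - 1) * (1 / n)) / g ^ 2) := by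
        ring
      rw [e1, e2]
      linarith
  intro x y hx hxy hyn
  exact hmain ⟨hx, le_trans hxy hyn⟩ ⟨le_trans hx hxy, hyn⟩ hxy
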